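/- Fix a prime p and an abelian group A. Let μ₀ be a function from the compact open subsets of ℚ_p × ℚ_p contained in X₀ to A satisfying μ₀(U ∪ V) = μ₀(U) + μ₀(V) whenever U and V are disjoint compact open subsets contained in X₀. Then there exists a unique p-invariant A-valued distribution μ on X such that μ(U) = μ₀(U) for every compact open subset U ⊆ X₀. -/

import Mathlib

/-- `X := (ℚ_p × ℚ_p) \ {(0,0)}`. -/
def X (p : ℕ) [Fact p.Prime] : Set (ℚ_[p] × ℚ_[p]) := {v | v ≠ 0}

/-- The set `X₀` of primitive vectors of `ℤ_p²`. -/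
def X0 (p : ℕ) [Fact p.Prime] : Set (ℚ_[p] × ℚ_[p]) :=
  {v | ‖v.1‖ ≤ 1 ∧ ‖v.2‖ ≤ 1 ∧ (‖v.1‖ = 1 ∨ ‖v.2‖ = 1)}

/-- `p^j·U := {(p^j x, p^j y) : (x, y) ∈ U}`. -/
def pScale (p : ℕ) [Fact p.Prime] (j : ℤ) (U : Set (ℚ_[p] × ℚ_[p])) : Set (ℚ_[p] × ℚ_[p]) :=
  (fun v => ((p : ℚ_[p]) ^ j * v.1, (p : ℚ_[p]) ^ j * v.2)) '' U

/-- A compact open subset of `X`: compact and open in `ℚ_p × ℚ_p` and contained in `X`. -/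
def IsCompactOpen (p : ℕ) [Fact p.Prime] (U : Set (ℚ_[p] × ℚ_[p])) : Prop :=
  IsCompact U ∧ IsOpen U ∧ U ⊆ X p

/-- An `A`-valued distribution on `X`: additive on disjoint compact open subsets of `X`. -/
def IsDistribution (p : ℕ) [Fact p.Prime] {A : Type*} [AddCommGroup A]
    (μ : Set (ℚ_[p] × ℚ_[p]) → A) : Prop :=
  ∀ U V, IsCompactOpen p U → IsCompactOpen p V → Disjoint U V → μ (U ∪ V) = μ U + μ V

/-- `μ` is `p`-invariant: `μ(p·U) = μ(U)` for every compact open `U ⊆ X`. -/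
def IsPInvariant (p : ℕ) [Fact p.Prime] {A : Type*} [AddCommGroup A]
    (μ : Set (ℚ_[p] × ℚ_[p]) → A) : Prop :=
  ∀ U, IsCompactOpen p U → μ (pScale p 1 U) = μ U

section Aux

variable (p : ℕ) [Fact p.Prime]

lemma hp1R : 1 < (p : ℝ) := by exact_mod_cast (Fact.out : p.Prime).one_lt

lemma hp0R : (0 : ℝ) < (p : ℝ) := lt_trans one_pos (hp1R p)

lemma hpQ : (p : ℚ_[p]) ≠ 0 := Nat.cast_ne_zero.mpr (Fact.out : p.Prime).ne_zero

/-- The scaling map. -/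
noncomputable def sc (j : ℤ) (v : ℚ_[p] × ℚ_[p]) : ℚ_[p] × ℚ_[p] :=
  ((p : ℚ_[p]) ^ j * v.1, (p : ℚ_[p]) ^ j * v.2)

lemma continuous_sc (j : ℤ) : Continuous (sc p j) := by
  unfold sc; fun_prop

lemma sc_sc (j k : ℤ) (v : ℚ_[p] × ℚ_[p]) : sc p j (sc p k v) = sc p (j + k) v := by
  simp only [sc, Prod.mk.injEq, ← mul_assoc, ← zpow_add₀ (hpQ p)]

lemma sc_zero (v : ℚ_[p] × ℚ_[p]) : sc p 0 v = v := by
  simp [sc]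

lemma sc_leftInv (j : ℤ) (v : ℚ_[p] × ℚ_[p]) : sc p (-j) (sc p j v) = v := by
  rw [sc_sc, neg_add_cancel, sc_zero]

lemma sc_inj (j : ℤ) : Function.Injective (sc p j) :=
  Function.LeftInverse.injective (g := sc p (-j)) (sc_leftInv p j)

lemma pScale_eq_image (j : ℤ) (U : Set (ℚ_[p] × ℚ_[p])) : pScale p j U = sc p j '' U := rfl

lemma mem_pScale {j : ℤ} {U : Set (ℚ_[p] × ℚ_[p])} {v : ℚ_[p] × ℚ_[p]} :
    v ∈ pScale p j U ↔ sc p (-j) v ∈ U := by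
  constructor
  · rintro ⟨w, hw, rfl⟩
    show sc p (-j) (sc p j w) ∈ U
    rwa [sc_leftInv]
  · intro h
    refine ⟨sc p (-j) v, h, ?_⟩
    show sc p j (sc p (-j) v) = v
    rw [sc_sc, add_neg_cancel, sc_zero]

lemma pScale_eq_preimage (j : ℤ) (U : Set (ℚ_[p] × ℚ_[p])) :
    pScale p j U = sc p (-j) ⁻¹' U := Set.ext fun _ => mem_pScale p

lemma pScale_pScale (a b : ℤ) (U : Set (ℚ_[p] × ℚ_[p])) :
    pScale p a (pScale p b U) = pScale p (a + b) U := by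
  simp only [pScale_eq_image, ← Set.image_comp]
  have h : sc p a ∘ sc p b = sc p (a + b) := funext (sc_sc p a b)
  rw [h]

lemma pScale_zero (U : Set (ℚ_[p] × ℚ_[p])) : pScale p 0 U = U := by
  simp only [pScale_eq_image]
  rw [show sc p 0 = id from funext (sc_zero p), Set.image_id]

lemma norm_sc (j : ℤ) (v : ℚ_[p] × ℚ_[p]) : ‖sc p j v‖ = (p : ℝ) ^ (-j) * ‖v‖ := by
  simp only [Prod.norm_def, sc, norm_mul, Padic.norm_p_zpow]
  rw [mul_comm ((p:ℝ) ^ (-j)) ‖v.1‖, mul_comm ((p:ℝ) ^ (-j)) ‖v.2‖,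
    ← max_mul_of_nonneg _ _ (le_of_lt (zpow_pos (hp0R p) (-j))), mul_comm]

lemma mem_X0_iff {v : ℚ_[p] × ℚ_[p]} : v ∈ X0 p ↔ ‖v‖ = 1 := by
  rw [Prod.norm_def]
  constructor
  · rintro ⟨h1, h2, h3⟩
    rcases h3 with h | h
    · rw [max_eq_left (h ▸ h2), h]
    · rw [max_eq_right (h ▸ h1), h]
  · intro h
    refine ⟨le_of_le_of_eq (le_max_left _ _) h, le_of_le_of_eq (le_max_right _ _) h, ?_⟩
    rcases max_choice ‖v.1‖ ‖v.2‖ with hc | hc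
    · exact Or.inl (hc ▸ h)
    · exact Or.inr (hc ▸ h)

/-- The `j`-th shell. -/
def shell (j : ℤ) : Set (ℚ_[p] × ℚ_[p]) := pScale p j (X0 p)

lemma mem_shell {j : ℤ} {v : ℚ_[p] × ℚ_[p]} : v ∈ shell p j ↔ ‖v‖ = (p : ℝ) ^ (-j) := by
  rw [shell, mem_pScale, mem_X0_iff, norm_sc, neg_neg]
  have hne : ((p : ℝ) ^ j) ≠ 0 := ne_of_gt (zpow_pos (hp0R p) _)
  rw [zpow_neg, ← one_div, mul_comm, eq_div_iff hne]

lemma X0_eq_shell_zero : X0 p = shell p 0 := by rw [shell, pScale_zero]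

lemma shell_disjoint {j k : ℤ} (h : j ≠ k) : Disjoint (shell p j) (shell p k) := by
  rw [Set.disjoint_left]
  intro v hj hk
  rw [mem_shell] at hj hk
  have := zpow_right_injective₀ (hp0R p) (ne_of_gt (hp1R p)) (hj ▸ hk)
  exact h (neg_injective this)

lemma norm_discrete (v : ℚ_[p] × ℚ_[p]) : ‖v‖ = 0 ∨ ∃ z : ℤ, ‖v‖ = (p : ℝ) ^ z := by
  rw [Prod.norm_def]
  by_cases h1 : v.1 = 0
  · by_cases h2 : v.2 = 0
    · left; simp [h1, h2]
    · right
      refine ⟨-v.2.valuation, ?_⟩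
      rw [h1, norm_zero, max_eq_right (norm_nonneg _), Padic.norm_eq_zpow_neg_valuation h2]
  · by_cases h2 : v.2 = 0
    · right
      refine ⟨-v.1.valuation, ?_⟩
      rw [h2, norm_zero, max_eq_left (norm_nonneg _), Padic.norm_eq_zpow_neg_valuation h1]
    · right
      rw [Padic.norm_eq_zpow_neg_valuation h1, Padic.norm_eq_zpow_neg_valuation h2]
      rcases le_total ((p:ℝ) ^ (-v.1.valuation)) ((p:ℝ) ^ (-v.2.valuation)) with h | h
      · exact ⟨-v.2.valuation, max_eq_right h⟩
      · exact ⟨-v.1.valuation, max_eq_left h⟩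

lemma shell_eq_preimage (j : ℤ) : shell p j = (fun v => ‖v‖) ⁻¹' {(p : ℝ) ^ (-j)} :=
  Set.ext fun v => by rw [mem_shell]; rfl

lemma isClosed_shell (j : ℤ) : IsClosed (shell p j) := by
  rw [shell_eq_preimage]
  exact IsClosed.preimage continuous_norm isClosed_singleton

lemma isOpen_shell (j : ℤ) : IsOpen (shell p j) := by
  have : shell p j = (fun v : ℚ_[p] × ℚ_[p] => ‖v‖) ⁻¹'
      (Set.Ioo ((p : ℝ) ^ (-j - 1)) ((p : ℝ) ^ (-j + 1))) := by
    ext v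
    simp only [mem_shell, Set.mem_preimage, Set.mem_Ioo]
    constructor
    · intro h
      rw [h]
      exact ⟨zpow_lt_zpow_right₀ (hp1R p) (by omega), zpow_lt_zpow_right₀ (hp1R p) (by omega)⟩
    · rintro ⟨hl, hr⟩
      rcases norm_discrete p v with h0 | ⟨z, hz⟩
      · exact absurd (h0 ▸ hl) (not_lt.mpr (le_of_lt (zpow_pos (hp0R p) _)))
      · rw [hz] at hl hr ⊢
        have h1 : -j - 1 < z := (zpow_lt_zpow_iff_right₀ (hp1R p)).mp hl
        have h2 : z < -j + 1 := (zpow_lt_zpow_iff_right₀ (hp1R p)).mp hr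
        congr 1; omega
  rw [this]
  exact IsOpen.preimage continuous_norm isOpen_Ioo

lemma isCompact_shell (j : ℤ) : IsCompact (shell p j) := by
  have hsub : shell p j ⊆ Metric.closedBall 0 ((p : ℝ) ^ (-j)) := by
    intro v hv
    rw [Metric.mem_closedBall, dist_zero_right]
    exact le_of_eq ((mem_shell p).mp hv)
  exact (isCompact_closedBall (0 : ℚ_[p] × ℚ_[p]) _).of_isClosed_subset (isClosed_shell p j) hsub

lemma shell_subset_X (j : ℤ) : shell p j ⊆ X p := by
  intro v hv
  rw [mem_shell] at hv
  intro h0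
  rw [h0, norm_zero] at hv
  exact (ne_of_gt (zpow_pos (hp0R p) (-j))) hv.symm

lemma X0_subset_X : X0 p ⊆ X p := (X0_eq_shell_zero p) ▸ shell_subset_X p 0

lemma cover_X {v : ℚ_[p] × ℚ_[p]} (hv : v ∈ X p) : ∃ j, v ∈ shell p j := by
  rcases norm_discrete p v with h0 | ⟨z, hz⟩
  · exact absurd (norm_eq_zero.mp h0) hv
  · exact ⟨-z, by rw [mem_shell, neg_neg]; exact hz⟩

lemma isCompact_pScale {j : ℤ} {U : Set (ℚ_[p] × ℚ_[p])} (hU : IsCompact U) :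
    IsCompact (pScale p j U) := hU.image (continuous_sc p j)

lemma isOpen_pScale {j : ℤ} {U : Set (ℚ_[p] × ℚ_[p])} (hU : IsOpen U) :
    IsOpen (pScale p j U) := by
  rw [pScale_eq_preimage]
  exact hU.preimage (continuous_sc p (-j))

lemma pScale_subset_X {j : ℤ} {U : Set (ℚ_[p] × ℚ_[p])} (hU : U ⊆ X p) :
    pScale p j U ⊆ X p := by
  rintro _ ⟨w, hw, rfl⟩
  intro h0
  apply hU hw
  have h1 : (p : ℚ_[p]) ^ j * w.1 = 0 := congrArg Prod.fst h0
  have h2 : (p : ℚ_[p]) ^ j * w.2 = 0 := congrArg Prod.snd h0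
  have hne : ((p : ℚ_[p]) ^ j) ≠ 0 := zpow_ne_zero _ (hpQ p)
  have := (mul_eq_zero.mp h1).resolve_left hne
  have := (mul_eq_zero.mp h2).resolve_left hne
  exact Prod.ext (by assumption) (by assumption)

lemma isCompactOpen_pScale {j : ℤ} {U : Set (ℚ_[p] × ℚ_[p])} (hU : IsCompactOpen p U) :
    IsCompactOpen p (pScale p j U) :=
  ⟨isCompact_pScale p hU.1, isOpen_pScale p hU.2.1, pScale_subset_X p hU.2.2⟩

end Aux

section Main

variable (p : ℕ) [Fact p.Prime] {A : Type*} [AddCommGroup A]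

/-- The piece of `U` on the `j`-th shell, transported back into `X₀`. -/
def piece (μ₀ : Set (ℚ_[p] × ℚ_[p]) → A) (U : Set (ℚ_[p] × ℚ_[p])) (j : ℤ) : A :=
  μ₀ (pScale p (-j) (U ∩ shell p j))

lemma piece_isCompact {U : Set (ℚ_[p] × ℚ_[p])} (hU : IsCompact U) (j : ℤ) :
    IsCompact (pScale p (-j) (U ∩ shell p j)) :=
  isCompact_pScale p (hU.inter_right (isClosed_shell p j))

lemma piece_isOpen {U : Set (ℚ_[p] × ℚ_[p])} (hU : IsOpen U) (j : ℤ) :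
    IsOpen (pScale p (-j) (U ∩ shell p j)) :=
  isOpen_pScale p (hU.inter (isOpen_shell p j))

lemma piece_subset_X0 (U : Set (ℚ_[p] × ℚ_[p])) (j : ℤ) :
    pScale p (-j) (U ∩ shell p j) ⊆ X0 p := by
  have h1 : pScale p (-j) (U ∩ shell p j) ⊆ pScale p (-j) (shell p j) :=
    Set.image_mono Set.inter_subset_right
  have h2 : pScale p (-j) (shell p j) = X0 p := by
    rw [shell, pScale_pScale, neg_add_cancel, pScale_zero]
  exact h2 ▸ h1

lemma piece_isCompactOpen {U : Set (ℚ_[p] × ℚ_[p])} (hU : IsCompact U) (hUo : IsOpen U) (j : ℤ) :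
    IsCompactOpen p (pScale p (-j) (U ∩ shell p j)) :=
  ⟨piece_isCompact p hU j, piece_isOpen p hUo j,
    fun v hv => X0_subset_X p (piece_subset_X0 p U j hv)⟩

lemma exists_shell_finset {U : Set (ℚ_[p] × ℚ_[p])} (hU : IsCompact U) (hX : U ⊆ X p) :
    ∃ s : Finset ℤ, ∀ j ∉ s, U ∩ shell p j = ∅ := by
  have hcov : U ⊆ ⋃ j : ℤ, shell p j := fun v hv => Set.mem_iUnion.mpr (cover_X p (hX hv))
  obtain ⟨s, hs⟩ := hU.elim_finite_subcover (fun j : ℤ => shell p j) (isOpen_shell p) hcov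
  refine ⟨s, fun j hj => ?_⟩
  ext v
  simp only [Set.mem_inter_iff, Set.mem_empty_iff_false, iff_false, not_and]
  intro hvU hvj
  obtain ⟨k, hks, hvk⟩ := Set.mem_iUnion₂.mp (hs hvU)
  rcases eq_or_ne j k with rfl | hne
  · exact hj hks
  · exact Set.disjoint_left.mp (shell_disjoint p hne) hvj hvk

lemma mu0_empty (μ₀ : Set (ℚ_[p] × ℚ_[p]) → A)
    (hμ₀ : ∀ U V : Set (ℚ_[p] × ℚ_[p]), IsCompact U → IsOpen U → U ⊆ X0 p →
      IsCompact V → IsOpen V → V ⊆ X0 p → Disjoint U V → μ₀ (U ∪ V) = μ₀ U + μ₀ V) :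
    μ₀ ∅ = 0 := by
  have h := hμ₀ ∅ ∅ isCompact_empty isOpen_empty (Set.empty_subset _)
    isCompact_empty isOpen_empty (Set.empty_subset _) disjoint_bot_left
  rw [Set.union_empty] at h
  exact left_eq_add.mp h

lemma piece_eq_zero_of_empty (μ₀ : Set (ℚ_[p] × ℚ_[p]) → A) (hz : μ₀ ∅ = 0)
    {U : Set (ℚ_[p] × ℚ_[p])} {j : ℤ} (h : U ∩ shell p j = ∅) :
    piece p μ₀ U j = 0 := by
  rw [piece, h, pScale_eq_image, Set.image_empty, hz]

lemma support_piece_finite (μ₀ : Set (ℚ_[p] × ℚ_[p]) → A) (hz : μ₀ ∅ = 0)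
    {U : Set (ℚ_[p] × ℚ_[p])} (hU : IsCompact U) (hX : U ⊆ X p) :
    (Function.support (piece p μ₀ U)).Finite := by
  obtain ⟨s, hs⟩ := exists_shell_finset p hU hX
  refine Set.Finite.subset s.finite_toSet fun j hj => ?_
  by_contra hjs
  exact hj (piece_eq_zero_of_empty p μ₀ hz (hs j hjs))

lemma mu'_empty (μ' : Set (ℚ_[p] × ℚ_[p]) → A) (hd : IsDistribution p μ') : μ' ∅ = 0 := by
  have hco : IsCompactOpen p (∅ : Set (ℚ_[p] × ℚ_[p])) :=
    ⟨isCompact_empty, isOpen_empty, Set.empty_subset _⟩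
  have h := hd ∅ ∅ hco hco disjoint_bot_left
  rw [Set.union_empty] at h
  exact left_eq_add.mp h

lemma distrib_finset_sum (μ' : Set (ℚ_[p] × ℚ_[p]) → A) (hd : IsDistribution p μ')
    (f : ℤ → Set (ℚ_[p] × ℚ_[p])) (s : Finset ℤ)
    (hco : ∀ j ∈ s, IsCompactOpen p (f j))
    (hdisj : ∀ i ∈ s, ∀ j ∈ s, i ≠ j → Disjoint (f i) (f j)) :
    μ' (⋃ j ∈ s, f j) = ∑ j ∈ s, μ' (f j) := by
  classical
  induction s using Finset.induction_on with
  | empty => simpa using mu'_empty p μ' hd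
  | @insert a s ha ih =>
    rw [Finset.set_biUnion_insert, Finset.sum_insert ha]
    have hcoU : IsCompactOpen p (⋃ j ∈ s, f j) := by
      refine ⟨s.finite_toSet.isCompact_biUnion (fun j hj => (hco j (Finset.mem_insert_of_mem hj)).1),
        isOpen_biUnion (fun j hj => (hco j (Finset.mem_insert_of_mem hj)).2.1),
        Set.iUnion₂_subset (fun j hj => (hco j (Finset.mem_insert_of_mem hj)).2.2)⟩
    have hdaU : Disjoint (f a) (⋃ j ∈ s, f j) := by
      rw [Set.disjoint_left]
      intro v hva hvU
      obtain ⟨k, hks, hvk⟩ := Set.mem_iUnion₂.mp hvU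
      have hak : a ≠ k := fun h => ha (h ▸ hks)
      exact Set.disjoint_left.mp
        (hdisj a (Finset.mem_insert_self a s) k (Finset.mem_insert_of_mem hks) hak) hva hvk
    rw [hd (f a) (⋃ j ∈ s, f j) (hco a (Finset.mem_insert_self a s)) hcoU hdaU]
    rw [ih (fun j hj => hco j (Finset.mem_insert_of_mem hj))
      (fun i hi j hj hij => hdisj i (Finset.mem_insert_of_mem hi) j (Finset.mem_insert_of_mem hj) hij)]

lemma pinv_nat (μ' : Set (ℚ_[p] × ℚ_[p]) → A) (hi : IsPInvariant p μ') :
    ∀ (n : ℕ) (V : Set (ℚ_[p] × ℚ_[p])), IsCompactOpen p V → μ' (pScale p (n : ℤ) V) = μ' V := by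
  intro n
  induction n with
  | zero => intro V _; rw [Nat.cast_zero, pScale_zero]
  | succ n ih =>
    intro V hV
    have hstep : pScale p ((n + 1 : ℕ) : ℤ) V = pScale p 1 (pScale p (n : ℤ) V) := by
      rw [pScale_pScale]; congr 1; push_cast; ring
    rw [hstep, hi _ (isCompactOpen_pScale p hV), ih V hV]

lemma pinv_int (μ' : Set (ℚ_[p] × ℚ_[p]) → A) (hi : IsPInvariant p μ') :
    ∀ (n : ℤ) (V : Set (ℚ_[p] × ℚ_[p])), IsCompactOpen p V → μ' (pScale p n V) = μ' V := by
  intro n V hV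
  rcases le_or_gt 0 n with hn | hn
  · obtain ⟨m, rfl⟩ := Int.eq_ofNat_of_zero_le hn
    exact pinv_nat p μ' hi m V hV
  · obtain ⟨m, hm⟩ : ∃ m : ℕ, n = -(m : ℤ) := ⟨n.natAbs, by omega⟩
    subst hm
    have hW : IsCompactOpen p (pScale p (-(m : ℤ)) V) := isCompactOpen_pScale p hV
    have h := pinv_nat p μ' hi m _ hW
    rw [pScale_pScale, add_neg_cancel, pScale_zero] at h
    exact h.symm

lemma piece_pScale_one (μ₀ : Set (ℚ_[p] × ℚ_[p]) → A) (U : Set (ℚ_[p] × ℚ_[p])) (j : ℤ) :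
    piece p μ₀ (pScale p 1 U) j = piece p μ₀ U (j - 1) := by
  have hshell : shell p j = pScale p 1 (shell p (j - 1)) := by
    rw [shell, shell, pScale_pScale]; congr 1; ring
  have hinter : pScale p 1 U ∩ shell p j = pScale p 1 (U ∩ shell p (j - 1)) := by
    rw [hshell, pScale_eq_image, pScale_eq_image, pScale_eq_image,
      ← Set.image_inter (sc_inj p 1)]
  rw [piece, hinter, pScale_pScale, piece]
  congr 1
  ring

end Main

/-- Every finitely additive `A`-valued function `μ₀` on the compact open subsets of
`ℚ_p × ℚ_p` contained in `X₀` extends uniquely to a `p`-invariant `A`-valued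
distribution `μ` on `X` (uniqueness meaning: any two such extensions agree on all
compact open subsets of `X`). -/
theorem stmt3 (p : ℕ) [Fact p.Prime] {A : Type*} [AddCommGroup A]
    (μ₀ : Set (ℚ_[p] × ℚ_[p]) → A)
    (hμ₀ : ∀ U V : Set (ℚ_[p] × ℚ_[p]), IsCompact U → IsOpen U → U ⊆ X0 p →
      IsCompact V → IsOpen V → V ⊆ X0 p → Disjoint U V → μ₀ (U ∪ V) = μ₀ U + μ₀ V) :
    ∃ μ : Set (ℚ_[p] × ℚ_[p]) → A,
      (IsDistribution p μ ∧ IsPInvariant p μ ∧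
        ∀ U : Set (ℚ_[p] × ℚ_[p]), IsCompact U → IsOpen U → U ⊆ X0 p → μ U = μ₀ U) ∧
      ∀ μ' : Set (ℚ_[p] × ℚ_[p]) → A,
        (IsDistribution p μ' ∧ IsPInvariant p μ' ∧
          ∀ U : Set (ℚ_[p] × ℚ_[p]), IsCompact U → IsOpen U → U ⊆ X0 p → μ' U = μ₀ U) →
        ∀ U, IsCompactOpen p U → μ' U = μ U := by
  classical
  have hz : μ₀ ∅ = 0 := mu0_empty p μ₀ hμ₀
  set μ : Set (ℚ_[p] × ℚ_[p]) → A := fun U => ∑ᶠ j, piece p μ₀ U j with hμdef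
  have hμapp : ∀ U, μ U = ∑ᶠ j, piece p μ₀ U j := fun U => rfl
  -- extension property
  have hext : ∀ U : Set (ℚ_[p] × ℚ_[p]), IsCompact U → IsOpen U → U ⊆ X0 p → μ U = μ₀ U := by
    intro U hUc hUo hUs
    have hUs0 : U ⊆ shell p 0 := (X0_eq_shell_zero p) ▸ hUs
    have hempty : ∀ j : ℤ, j ≠ 0 → piece p μ₀ U j = 0 := by
      intro j hj
      apply piece_eq_zero_of_empty p μ₀ hz
      apply Set.eq_empty_of_subset_empty
      intro v hv
      exact Set.disjoint_left.mp (shell_disjoint p hj.symm) (hUs0 hv.1) hv.2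
    rw [hμapp, finsum_eq_single _ 0 hempty, piece, neg_zero, pScale_zero,
      Set.inter_eq_self_of_subset_left hUs0]
  -- distribution property
  have hfin : ∀ U : Set (ℚ_[p] × ℚ_[p]), IsCompactOpen p U →
      (Function.support (piece p μ₀ U)).Finite :=
    fun U hU => support_piece_finite p μ₀ hz hU.1 hU.2.2
  have hdist : IsDistribution p μ := by
    intro U V hU hV hUV
    have hpt : ∀ j, piece p μ₀ (U ∪ V) j = piece p μ₀ U j + piece p μ₀ V j := by
      intro j
      have hsplit : (U ∪ V) ∩ shell p j = (U ∩ shell p j) ∪ (V ∩ shell p j) :=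
        Set.union_inter_distrib_right _ _ _
      have hd2 : Disjoint (U ∩ shell p j) (V ∩ shell p j) :=
        hUV.mono Set.inter_subset_left Set.inter_subset_left
      simp only [piece, hsplit, pScale_eq_image, Set.image_union]
      exact hμ₀ _ _ (piece_isCompact p hU.1 j) (piece_isOpen p hU.2.1 j) (piece_subset_X0 p U j)
        (piece_isCompact p hV.1 j) (piece_isOpen p hV.2.1 j) (piece_subset_X0 p V j)
        ((Set.disjoint_image_iff (sc_inj p (-j))).mpr hd2)
    calc μ (U ∪ V) = ∑ᶠ j, (piece p μ₀ U j + piece p μ₀ V j) := by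
          rw [hμapp]; exact finsum_congr hpt
      _ = μ U + μ V := finsum_add_distrib (hfin U hU) (hfin V hV)
  -- p-invariance
  have hinv : IsPInvariant p μ := by
    intro U hU
    have h1 : μ (pScale p 1 U) = ∑ᶠ j, piece p μ₀ U (j - 1) := by
      rw [hμapp]; exact finsum_congr (piece_pScale_one p μ₀ U)
    rw [h1, hμapp]
    exact finsum_comp_equiv (Equiv.subRight (1 : ℤ))
  refine ⟨μ, ⟨hdist, hinv, hext⟩, ?_⟩
  -- uniqueness
  rintro μ' ⟨hd', hi', he'⟩ U hU
  obtain ⟨s, hs⟩ := exists_shell_finset p hU.1 hU.2.2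
  have hUeq : U = ⋃ j ∈ s, (U ∩ shell p j) := by
    ext v
    simp only [Set.mem_iUnion, Set.mem_inter_iff]
    constructor
    · intro hv
      obtain ⟨j, hj⟩ := cover_X p (hU.2.2 hv)
      have hjs : j ∈ s := by
        by_contra hjs
        have h := hs j hjs
        exact (h ▸ (Set.mem_inter hv hj) : v ∈ (∅ : Set (ℚ_[p] × ℚ_[p])))
      exact ⟨j, hjs, hv, hj⟩
    · rintro ⟨j, _, hv, _⟩; exact hv
  have hco : ∀ j ∈ s, IsCompactOpen p (U ∩ shell p j) := fun j _ =>
    ⟨hU.1.inter_right (isClosed_shell p j), hU.2.1.inter (isOpen_shell p j),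
      fun v hv => hU.2.2 hv.1⟩
  have hdisj : ∀ i ∈ s, ∀ j ∈ s, i ≠ j → Disjoint (U ∩ shell p i) (U ∩ shell p j) :=
    fun i _ j _ hij => (shell_disjoint p hij).mono Set.inter_subset_right Set.inter_subset_right
  have h1 : μ' U = ∑ j ∈ s, μ' (U ∩ shell p j) := by
    conv_lhs => rw [hUeq]
    exact distrib_finset_sum p μ' hd' _ s hco hdisj
  have h2 : ∀ j ∈ s, μ' (U ∩ shell p j) = piece p μ₀ U j := by
    intro j _
    have hWco : IsCompactOpen p (pScale p (-j) (U ∩ shell p j)) :=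
      piece_isCompactOpen p hU.1 hU.2.1 j
    have hback : pScale p j (pScale p (-j) (U ∩ shell p j)) = U ∩ shell p j := by
      rw [pScale_pScale, add_neg_cancel, pScale_zero]
    rw [← hback, pinv_int p μ' hi' j _ hWco,
      he' _ hWco.1 hWco.2.1 (piece_subset_X0 p U j)]
    rfl
  have hsupp : Function.support (piece p μ₀ U) ⊆ (s : Set ℤ) := by
    intro j hj
    by_contra hjs
    exact hj (piece_eq_zero_of_empty p μ₀ hz (hs j hjs))
  rw [h1, Finset.sum_congr rfl h2, hμapp]
  exact (finsum_eq_finset_sum_of_support_subset _ hsupp).symm
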